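/- There exists a universal constant C such that the following holds for S = 𝖱 and for S = 𝖱⁺. For every (weakest) width-w ABP of length L over S in a finite variable set, with size s := w · (L + 1) and s ≥ 2, and for every integer p ≥ 1, there exists a (weakest) width-(2p+1) ABP over S computing the same function S^V → S whose size is at most s^{C · p · s^{1/p}}. In particular, every ABP over 𝖱 or 𝖱⁺ can be converted into an equivalent ABP of width O(log s) with at most quasi-polynomial blow-up in size. -/

import Mathlib

open MvPolynomial

/-- `𝖱`: the min-plus semiring on `ℝ ∪ {∞}`. -/
abbrev TR : Type := Tropical (WithTop ℝ)

/-- `𝖱⁺`: the min-plus semiring on `ℝ≥0 ∪ {∞}`. -/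
abbrev TRP : Type := Tropical (WithTop NNReal)

/-- In a (weakest) ABP every matrix entry is a single variable or a constant. -/
def IsABP {S V : Type} [CommSemiring S] {w L : ℕ}
    (M : Fin L → Matrix (Fin w) (Fin w) (MvPolynomial V S)) : Prop :=
  ∀ l i j, (∃ v, M l i j = X v) ∨ (∃ c, M l i j = C c)

/-- The function computed by a (weakest) width-`w` ABP: the evaluation at an
assignment of the `(1,1)`-entry of the min-plus matrix product `M₁ ⋯ M_L`. -/
noncomputable def ABPeval {S V : Type} [CommSemiring S] {w L : ℕ} [NeZero w]
    (M : Fin L → Matrix (Fin w) (Fin w) (MvPolynomial V S)) (a : V → S) : S :=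
  eval a ((List.ofFn M).prod 0 0)


namespace WidthRed
open Matrix

variable {R : Type} [CommSemiring R] {q : ℕ}

/-! ### Gadget matrices -/

def Em : Matrix (Fin (q+1)) (Fin (q+1)) R := Matrix.single 0 0 1
def ia : Fin (q+3) := ⟨q+1, by omega⟩
def ib : Fin (q+3) := ⟨q+2, by omega⟩

def Sm : Matrix (Fin (q+3)) (Fin (q+3)) R :=
  Matrix.single ia ia 1 + Matrix.single ia 0 1 + Matrix.single ib ib 1
def Tm : Matrix (Fin (q+3)) (Fin (q+3)) R :=
  Matrix.single 0 ib 1 + Matrix.single ia ia 1 + Matrix.single ib ib 1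
def Fm : Matrix (Fin (q+3)) (Fin (q+3)) R := Matrix.single ib 0 1
def Im : Matrix (Fin (q+3)) (Fin (q+3)) R := Matrix.single 0 ia 1
def G (v : R) : Matrix (Fin (q+3)) (Fin (q+3)) R :=
  Matrix.single ia ia 1 + Matrix.single ia ib v + Matrix.single ib ib 1
def Km (v : R) : Matrix (Fin (q+3)) (Fin (q+3)) R :=
  Matrix.single ia 0 v + Matrix.single ib 0 1

lemma ia_ne_zero : (ia : Fin (q+3)) ≠ 0 := by simp [ia, Fin.ext_iff]
lemma ib_ne_zero : (ib : Fin (q+3)) ≠ 0 := by simp [ib, Fin.ext_iff]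
lemma ia_ne_ib : (ia : Fin (q+3)) ≠ ib := by simp [ia, ib, Fin.ext_iff]
lemma ib_ne_ia : (ib : Fin (q+3)) ≠ ia := by simp [ia, ib, Fin.ext_iff]
lemma zero_ne_ia : (0 : Fin (q+3)) ≠ ia := ia_ne_zero.symm
lemma zero_ne_ib : (0 : Fin (q+3)) ≠ ib := ib_ne_zero.symm

/-! ### The embedding -/

def emb (A : Matrix (Fin (q+1)) (Fin (q+1)) R) : Matrix (Fin (q+3)) (Fin (q+3)) R :=
  (fromBlocks A 0 0 (1 : Matrix (Fin 2) (Fin 2) R)).submatrix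
    (finSumFinEquiv (m := q+1) (n := 2)).symm (finSumFinEquiv (m := q+1) (n := 2)).symm

lemma emb_one : emb (1 : Matrix (Fin (q+1)) (Fin (q+1)) R) = 1 := by
  rw [emb, fromBlocks_one, submatrix_one_equiv]

lemma emb_mul (A B : Matrix (Fin (q+1)) (Fin (q+1)) R) :
    emb (A * B) = emb A * emb B := by
  rw [emb, emb, emb, submatrix_mul_equiv _ _ _ (finSumFinEquiv (m := q+1) (n := 2)).symm _,
    fromBlocks_multiply]
  simp

def embHom : Matrix (Fin (q+1)) (Fin (q+1)) R →* Matrix (Fin (q+3)) (Fin (q+3)) R where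
  toFun := emb
  map_one' := emb_one
  map_mul' := emb_mul

lemma emb_sbm (v : R) :
    emb (Matrix.single (0 : Fin (q+1)) 0 v)
      = Matrix.single (0 : Fin (q+3)) 0 v + Matrix.single ia ia 1 + Matrix.single ib ib 1 := by
  ext i j
  obtain ⟨si, rfl⟩ : ∃ s : Fin (q+1) ⊕ Fin 2, finSumFinEquiv s = i :=
    ⟨_, Equiv.apply_symm_apply _ _⟩
  obtain ⟨sj, rfl⟩ : ∃ s : Fin (q+1) ⊕ Fin 2, finSumFinEquiv s = j :=
    ⟨_, Equiv.apply_symm_apply _ _⟩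
  rcases si with a | b <;> rcases sj with a' | b' <;>
    simp only [emb, submatrix_apply, Equiv.symm_apply_apply] <;>
    simp only [fromBlocks_apply₁₁, fromBlocks_apply₁₂, fromBlocks_apply₂₁, fromBlocks_apply₂₂, Matrix.add_apply, Matrix.single_apply, Matrix.one_apply, Matrix.zero_apply, ia, ib, Fin.ext_iff, finSumFinEquiv_apply_left, finSumFinEquiv_apply_right, Fin.coe_castAdd, Fin.coe_natAdd, Fin.val_zero] <;>
    (try rcases a with ⟨a, ha⟩) <;> (try rcases a' with ⟨a', ha'⟩) <;>
    (try rcases b with ⟨b, hb⟩) <;> (try rcases b' with ⟨b', hb'⟩) <;>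
    simp only [] <;> split_ifs <;>
    first | rfl | omega | simp

/-! ### Gadget identities -/

lemma SMT (v : R) :
    Sm * (Matrix.single (0 : Fin (q+3)) 0 v + Matrix.single ia ia 1 + Matrix.single ib ib 1) * Tm
      = G v := by
  have h1 := ia_ne_zero (q := q); have h2 := ib_ne_zero (q := q)
  have h3 := ia_ne_ib (q := q); have h4 := ib_ne_ia (q := q)
  have h5 := zero_ne_ia (q := q); have h6 := zero_ne_ib (q := q)
  simp only [Sm, Tm, G, Matrix.add_mul, Matrix.mul_add,
    single_mul_single_same, ne_eq, h1, h2, h3, h4, h5, h6,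
    single_mul_single_of_ne, one_mul, mul_one, add_zero, zero_add,
    not_false_eq_true]
  abel

lemma GK (v v' : R) : G (q := q) v * Km v' = Km (v + v') := by
  have h1 := ia_ne_zero (q := q); have h2 := ib_ne_zero (q := q)
  have h3 := ia_ne_ib (q := q); have h4 := ib_ne_ia (q := q)
  have h5 := zero_ne_ia (q := q); have h6 := zero_ne_ib (q := q)
  simp only [G, Km, Matrix.add_mul, Matrix.mul_add,
    single_mul_single_same, ne_eq, h1, h2, h3, h4, h5, h6,
    single_mul_single_of_ne, one_mul, mul_one, add_zero, zero_add,
    not_false_eq_true]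
  rw [add_comm v v', single_add]
  abel

lemma Fm_eq : (Fm : Matrix (Fin (q+3)) (Fin (q+3)) R) = Km 0 := by
  simp [Fm, Km, single_zero]

lemma IK (v : R) : ((Im * Km v : Matrix (Fin (q+3)) (Fin (q+3)) R)) 0 0 = v := by
  have h3 := ia_ne_ib (q := q)
  simp only [Im, Km, Matrix.mul_add, single_mul_single_same,
    ne_eq, h3, single_mul_single_of_ne, one_mul, add_zero, not_false_eq_true]
  simp [single_apply_same]

/-! ### Chains -/

def chain (progs : List (List (Matrix (Fin (q+1)) (Fin (q+1)) R))) :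
    List (Matrix (Fin (q+1)) (Fin (q+1)) R) :=
  Em :: progs.flatMap (fun Q => Q ++ [Em])

lemma chain_nil : chain ([] : List (List (Matrix (Fin (q+1)) (Fin (q+1)) R))) = [Em] := by
  simp [chain]

lemma chain_cons (Q : List (Matrix (Fin (q+1)) (Fin (q+1)) R)) (rest) :
    chain (Q :: rest) = Em :: (Q ++ chain rest) := by
  simp [chain]

lemma EAE (A : Matrix (Fin (q+1)) (Fin (q+1)) R) (v : R) :
    Em * (A * Matrix.single 0 0 v) = Matrix.single (0 : Fin (q+1)) 0 (A 0 0 * v) := by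
  ext i j
  rcases eq_or_ne i 0 with rfl | hi
  · rw [Em, single_mul_apply_same, one_mul]
    rcases eq_or_ne j 0 with rfl | hj
    · rw [mul_single_apply_same, single_apply_same]
    · rw [mul_single_apply_of_ne _ _ _ _ _ hj,
        single_apply_of_ne _ _ _ _ _ (by tauto)]
  · rw [Em, single_mul_apply_of_ne _ _ _ _ _ hi,
      single_apply_of_ne _ _ _ _ _ (by tauto)]

lemma chain_prod (progs : List (List (Matrix (Fin (q+1)) (Fin (q+1)) R))) :
    (chain progs).prod = Matrix.single 0 0 ((progs.map (fun Q => Q.prod 0 0)).prod) := by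
  induction progs with
  | nil => simp [chain_nil, Em]
  | cons Q rest ih =>
      rw [chain_cons, List.prod_cons, List.prod_append, ih, List.map_cons, List.prod_cons, EAE]


/-! ### The summation program -/

lemma flatMap_prod {α : Type} {M : Type} [Monoid M] (l : List α) (f : α → List M) :
    (l.flatMap f).prod = (l.map fun x => (f x).prod).prod := by
  induction l with
  | nil => simp
  | cons x xs ih => simp [List.prod_append, ih]

def bigprog (qs : List (List (List (Matrix (Fin (q+1)) (Fin (q+1)) R)))) :
    List (Matrix (Fin (q+3)) (Fin (q+3)) R) :=
  Im :: (qs.flatMap fun progs => Sm :: ((chain progs).map emb ++ [Tm])) ++ [Fm]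

lemma Gfold (vs : List R) :
    ((vs.map G).prod : Matrix (Fin (q+3)) (Fin (q+3)) R) * Km 0 = Km vs.sum := by
  induction vs with
  | nil => simp
  | cons v rest ih =>
      rw [List.map_cons, List.prod_cons, mul_assoc, ih, GK, List.sum_cons]

lemma bigprog_val (qs : List (List (List (Matrix (Fin (q+1)) (Fin (q+1)) R)))) :
    (bigprog qs).prod 0 0
      = (qs.map fun progs => (progs.map fun Q => Q.prod 0 0).prod).sum := by
  have h1 : ∀ progs : List (List (Matrix (Fin (q+1)) (Fin (q+1)) R)),
      (Sm :: ((chain progs).map emb ++ [Tm])).prod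
        = G ((progs.map fun Q => Q.prod 0 0).prod) := by
    intro progs
    rw [List.prod_cons, List.prod_append, List.prod_singleton,
      show (emb : Matrix (Fin (q+1)) (Fin (q+1)) R → _) = ⇑(embHom (R := R) (q := q)) from rfl,
      List.prod_hom _ (embHom (R := R) (q := q))]
    rw [show ⇑(embHom (R := R) (q := q)) = emb from rfl, chain_prod, emb_sbm, ← mul_assoc, SMT]
  rw [bigprog, List.cons_append, List.prod_cons, List.prod_append, List.prod_singleton,
    flatMap_prod]
  have h2 : (qs.map fun progs => (Sm :: ((chain progs).map emb ++ [Tm])).prod)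
      = (qs.map fun progs => (progs.map fun Q => Q.prod 0 0).prod).map G := by
    rw [List.map_map]
    exact List.map_congr_left fun progs _ => h1 progs
  rw [h2, Fm_eq, Gfold, IK]

/-! ### Entry shapes -/

section Ok
variable (Ok : R → Prop)

def OkL {k : ℕ} (l : List (Matrix (Fin k) (Fin k) R)) : Prop :=
  ∀ A ∈ l, ∀ i j, Ok (A i j)

lemma ok_sbm {k : ℕ} [NeZero k] (h0 : Ok 0) (h1 : Ok 1) {c : R} (hc : Ok c) (a b : Fin k) (i j : Fin k) :
    Ok (Matrix.single a b c i j) := by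
  unfold Matrix.single
  dsimp only [of_apply]
  split
  · exact hc
  · exact h0

lemma ok_add3 {k : ℕ} [NeZero k] (h0 : Ok 0) {a₁ b₁ a₂ b₂ a₃ b₃ : Fin k} {c₁ c₂ c₃ : R}
    (hd : (a₁, b₁) ≠ (a₂, b₂) ∧ (a₁, b₁) ≠ (a₃, b₃) ∧ (a₂, b₂) ≠ (a₃, b₃))
    (hc₁ : Ok c₁) (hc₂ : Ok c₂) (hc₃ : Ok c₃) (i j : Fin k) :
    Ok ((Matrix.single a₁ b₁ c₁ + Matrix.single a₂ b₂ c₂ + Matrix.single a₃ b₃ c₃) i j) := by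
  obtain ⟨d1, d2, d3⟩ := hd
  simp only [Matrix.add_apply]
  unfold Matrix.single
  simp only [of_apply]
  split_ifs <;> simp_all [Prod.ext_iff]

lemma ok_Sm (h0 : Ok 0) (h1 : Ok 1) (i j : Fin (q+3)) : Ok (Sm i j) := by
  refine ok_add3 Ok h0 ?_ h1 h1 h1 i j
  refine ⟨?_, ?_, ?_⟩ <;> simp [Prod.ext_iff, ia, ib, Fin.ext_iff]

lemma ok_Tm (h0 : Ok 0) (h1 : Ok 1) (i j : Fin (q+3)) : Ok (Tm i j) := by
  refine ok_add3 Ok h0 ?_ h1 h1 h1 i j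
  refine ⟨?_, ?_, ?_⟩ <;> simp [Prod.ext_iff, ia, ib, Fin.ext_iff]

lemma ok_Fm (h0 : Ok 0) (h1 : Ok 1) (i j : Fin (q+3)) : Ok (Fm i j) := ok_sbm Ok h0 h1 h1 _ _ i j
lemma ok_Im (h0 : Ok 0) (h1 : Ok 1) (i j : Fin (q+3)) : Ok (Im i j) := ok_sbm Ok h0 h1 h1 _ _ i j
lemma ok_Em (h0 : Ok 0) (h1 : Ok 1) (i j : Fin (q+1)) : Ok (Em i j) := ok_sbm Ok h0 h1 h1 _ _ i j

lemma ok_emb (h0 : Ok 0) (h1 : Ok 1) {A : Matrix (Fin (q+1)) (Fin (q+1)) R} (hA : ∀ i j, Ok (A i j))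
    (i j : Fin (q+3)) : Ok (emb A i j) := by
  rw [emb, submatrix_apply]
  rcases (finSumFinEquiv (m := q+1) (n := 2)).symm i with a | b <;>
    rcases (finSumFinEquiv (m := q+1) (n := 2)).symm j with a' | b'
  · exact hA a a'
  · simpa using h0
  · simpa using h0
  · rw [fromBlocks_apply₂₂, Matrix.one_apply]
    split
    · exact h1
    · exact h0

lemma bigprog_ok (h0 : Ok 0) (h1 : Ok 1) (qs : List (List (List (Matrix (Fin (q+1)) (Fin (q+1)) R))))
    (hqs : ∀ progs ∈ qs, ∀ Q ∈ progs, OkL Ok Q) :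
    OkL Ok (bigprog qs) := by
  intro A hA
  rw [bigprog, List.mem_append, List.mem_singleton] at hA
  rcases hA with hA | rfl
  · rcases List.mem_cons.mp hA with rfl | hA
    · exact ok_Im Ok h0 h1
    · rw [List.mem_flatMap] at hA
      obtain ⟨progs, hprogs, hmem⟩ := hA
      rcases List.mem_cons.mp hmem with rfl | hmem
      · exact ok_Sm Ok h0 h1
      · rcases List.mem_append.mp hmem with hmem | hmem
        · rw [List.mem_map] at hmem
          obtain ⟨B, hB, rfl⟩ := hmem
          refine ok_emb Ok h0 h1 ?_
          rcases List.mem_cons.mp hB with rfl | hB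
          · exact ok_Em Ok h0 h1
          · rw [List.mem_flatMap] at hB
            obtain ⟨Q, hQ, hBQ⟩ := hB
            rcases List.mem_append.mp hBQ with hBQ | hBQ
            · exact hqs progs hprogs Q hQ B hBQ
            · rw [List.mem_singleton] at hBQ
              subst hBQ
              exact ok_Em Ok h0 h1
        · rw [List.mem_singleton] at hmem
          subst hmem
          exact ok_Tm Ok h0 h1
  · exact ok_Fm Ok h0 h1

end Ok

/-! ### Length of the summation program -/

lemma sum_flatMap {α β : Type} (l : List α) (g : α → List β) (f : β → R) :
    ((l.flatMap g).map f).sum = (l.map fun x => ((g x).map f).sum).sum := by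
  induction l with
  | nil => simp
  | cons x xs ih => simp [List.sum_append, ih]

lemma len_flatMap_append (progs : List (List (Matrix (Fin (q+1)) (Fin (q+1)) R))) :
    (progs.flatMap fun Q => Q ++ [Em]).length = (progs.map fun Q => Q.length + 1).sum := by
  induction progs with
  | nil => simp
  | cons Q rest ih => simp [ih]; omega

lemma bigprog_len (qs : List (List (List (Matrix (Fin (q+1)) (Fin (q+1)) R))))
    (N t b : ℕ) (hN : qs.length ≤ N)
    (ht : ∀ progs ∈ qs, progs.length ≤ t)
    (hb : ∀ progs ∈ qs, ∀ Q ∈ progs, Q.length ≤ b) :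
    (bigprog qs).length ≤ 2 + N * (3 + t * (b + 1)) := by
  have hblock : ∀ progs ∈ qs,
      (Sm (q := q) (R := R) :: ((chain progs).map emb ++ [Tm])).length ≤ 3 + t * (b + 1) := by
    intro progs hprogs
    have hc : (chain progs).length = 1 + (progs.map fun Q => Q.length + 1).sum := by
      rw [chain, List.length_cons, len_flatMap_append]
      omega
    have hsum : (progs.map fun Q => Q.length + 1).sum ≤ progs.length * (b + 1) := by
      have := List.sum_le_card_nsmul (progs.map fun Q => Q.length + 1) (b + 1) ?_
      · simpa using this
      · intro x hx
        rw [List.mem_map] at hx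
        obtain ⟨Q, hQ, rfl⟩ := hx
        exact Nat.add_le_add_right (hb progs hprogs Q hQ) 1
    have : (progs.map fun Q => Q.length + 1).sum ≤ t * (b + 1) :=
      hsum.trans (Nat.mul_le_mul_right _ (ht progs hprogs))
    simp only [List.length_cons, List.length_append, List.length_map, List.length_singleton,
      List.length_nil]
    omega
  have hflat : (qs.flatMap fun progs =>
      Sm (q := q) (R := R) :: ((chain progs).map emb ++ [Tm])).length ≤ N * (3 + t * (b + 1)) := by
    rw [List.length_flatMap]
    calc (qs.map (List.length ∘ fun progs =>
            Sm (q := q) (R := R) :: ((chain progs).map emb ++ [Tm]))).sum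
        ≤ qs.length * (3 + t * (b + 1)) := by
          have := List.sum_le_card_nsmul (qs.map (List.length ∘ fun progs =>
            Sm (q := q) (R := R) :: ((chain progs).map emb ++ [Tm]))) (3 + t * (b + 1)) ?_
          · simpa using this
          · intro x hx
            rw [List.mem_map] at hx
            obtain ⟨progs, hprogs, rfl⟩ := hx
            exact hblock progs hprogs
      _ ≤ N * (3 + t * (b + 1)) := Nat.mul_le_mul_right _ hN
  rw [bigprog]
  simp only [List.length_append, List.length_cons, List.length_singleton, List.length_nil]
  omega

/-! ### Path monomials -/

section pm
variable {α : Type} {w : ℕ}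

def pm : List (Matrix (Fin (w+1)) (Fin (w+1)) α) → Fin (w+1) → Fin (w+1) → List (List α)
  | [], i, j => if i = j then [[]] else []
  | A :: As, i, j => (List.finRange (w+1)).flatMap fun t => (pm As t j).map (A i t :: ·)

lemma pm_sum (f : α → R) : ∀ (Ms : List (Matrix (Fin (w+1)) (Fin (w+1)) α)) (i j : Fin (w+1)),
    ((pm Ms i j).map fun mon => (mon.map f).prod).sum
      = ((Ms.map fun A => Matrix.map A f).prod) i j := by
  intro Ms
  induction Ms with
  | nil =>
      intro i j
      rw [pm, List.map_nil, List.prod_nil, Matrix.one_apply]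
      split_ifs <;> simp
  | cons A As ih =>
      intro i j
      rw [pm, List.map_cons, List.prod_cons, Matrix.mul_apply, Fin.sum_univ_def,
        sum_flatMap]
      congr 1
      refine List.map_congr_left fun t _ => ?_
      rw [List.map_map]
      have heq : ((fun mon => (mon.map f).prod) ∘ (A i t :: ·))
          = fun mon => f (A i t) * ((mon.map f).prod : R) := by
        funext mon
        simp
      rw [heq, List.sum_map_mul_left, ih t j, Matrix.map_apply]

lemma pm_length : ∀ (Ms : List (Matrix (Fin (w+1)) (Fin (w+1)) α)) (i j : Fin (w+1)),
    (pm Ms i j).length ≤ (w+1) ^ Ms.length := by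
  intro Ms
  induction Ms with
  | nil => intro i j; rw [pm]; split_ifs <;> simp
  | cons A As ih =>
      intro i j
      rw [pm, List.length_flatMap]
      calc ((List.finRange (w+1)).map (List.length ∘ fun t => (pm As t j).map (A i t :: ·))).sum
          ≤ ((List.finRange (w+1)).length) * ((w+1) ^ As.length) := by
            have := List.sum_le_card_nsmul ((List.finRange (w+1)).map
              (List.length ∘ fun t => (pm As t j).map (A i t :: ·))) ((w+1) ^ As.length) ?_
            · simpa using this
            · intro x hx
              rw [List.mem_map] at hx
              obtain ⟨t, ht, rfl⟩ := hx
              simpa using ih t j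
        _ ≤ (w+1) ^ (A :: As).length := by
            simp [List.length_cons, pow_succ, List.length_finRange, Nat.mul_comm]

lemma pm_mem_length : ∀ (Ms : List (Matrix (Fin (w+1)) (Fin (w+1)) α)) (i j : Fin (w+1)),
    ∀ mon ∈ pm Ms i j, mon.length = Ms.length := by
  intro Ms
  induction Ms with
  | nil =>
      intro i j mon hmon
      rw [pm] at hmon
      split_ifs at hmon <;> simp_all
  | cons A As ih =>
      intro i j mon hmon
      rw [pm, List.mem_flatMap] at hmon
      obtain ⟨t, ht, hmon⟩ := hmon
      rw [List.mem_map] at hmon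
      obtain ⟨mon', hmon', rfl⟩ := hmon
      simp [ih t j mon' hmon']

lemma pm_mem_entry : ∀ (Ms : List (Matrix (Fin (w+1)) (Fin (w+1)) α)) (i j : Fin (w+1)),
    ∀ mon ∈ pm Ms i j, ∀ x ∈ mon, ∃ A ∈ Ms, ∃ a b, x = A a b := by
  intro Ms
  induction Ms with
  | nil =>
      intro i j mon hmon
      rw [pm] at hmon
      split_ifs at hmon <;> simp_all
  | cons A As ih =>
      intro i j mon hmon x hx
      rw [pm, List.mem_flatMap] at hmon
      obtain ⟨t, ht, hmon⟩ := hmon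
      rw [List.mem_map] at hmon
      obtain ⟨mon', hmon', rfl⟩ := hmon
      rcases List.mem_cons.mp hx with rfl | hx
      · exact ⟨A, List.mem_cons_self, i, t, rfl⟩
      · obtain ⟨B, hB, a, b, rfl⟩ := ih t j mon' hmon' x hx
        exact ⟨B, List.mem_cons_of_mem _ hB, a, b, rfl⟩

end pm

/-! ### Chunking a list -/

section chunks
variable {α : Type}

def chunks (c : ℕ) : ℕ → List α → List (List α)
  | 0, _ => []
  | _+1, [] => []
  | m+1, l => l.take (c+1) :: chunks c m (l.drop (c+1))

lemma chunks_nil (c m : ℕ) : chunks c m ([] : List α) = [] := by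
  cases m <;> rfl

lemma chunks_cons (c m : ℕ) (x : α) (xs : List α) :
    chunks c (m+1) (x :: xs) = (x :: xs).take (c+1) :: chunks c m ((x :: xs).drop (c+1)) := rfl

lemma chunks_flatten (c : ℕ) : ∀ (m : ℕ) (l : List α), l.length ≤ (c+1) * m →
    (chunks c m l).flatten = l := by
  intro m
  induction m with
  | zero =>
      intro l hl
      simp at hl
      simp [hl, chunks]
  | succ m ih =>
      intro l hl
      cases l with
      | nil => simp [chunks_nil]
      | cons x xs =>
          rw [chunks_cons, List.flatten_cons, ih _ ?_]
          · exact List.take_append_drop _ _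
          · rw [List.length_drop]
            rw [List.length_cons] at hl ⊢
            rw [Nat.mul_succ] at hl
            omega

lemma chunks_length (c : ℕ) : ∀ (m : ℕ) (l : List α), (chunks c m l).length ≤ m := by
  intro m
  induction m with
  | zero => intro l; simp [chunks]
  | succ m ih =>
      intro l
      cases l with
      | nil => simp [chunks_nil]
      | cons x xs =>
          rw [chunks_cons, List.length_cons]
          exact Nat.succ_le_succ (ih _)

lemma chunks_mem_length (c : ℕ) : ∀ (m : ℕ) (l : List α), ∀ ch ∈ chunks c m l,
    ch.length ≤ c + 1 := by
  intro m
  induction m with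
  | zero => intro l ch hch; simp [chunks] at hch
  | succ m ih =>
      intro l ch hch
      cases l with
      | nil => simp [chunks_nil] at hch
      | cons x xs =>
          rw [chunks_cons] at hch
          rcases List.mem_cons.mp hch with rfl | hch
          · simpa using List.length_take_le _ _
          · exact ih _ ch hch

lemma chunks_mem_sub (c : ℕ) : ∀ (m : ℕ) (l : List α), ∀ ch ∈ chunks c m l,
    ∀ A ∈ ch, A ∈ l := by
  intro m
  induction m with
  | zero => intro l ch hch; simp [chunks] at hch
  | succ m ih =>
      intro l ch hch A hA
      cases l with
      | nil => simp [chunks_nil] at hch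
      | cons x xs =>
          rw [chunks_cons] at hch
          rcases List.mem_cons.mp hch with rfl | hch
          · exact List.mem_of_mem_take hA
          · exact List.mem_of_mem_drop (ih _ ch hch A hA)

end chunks

/-! ### The recursive width reduction -/

/-- Length bound for the width-`2p+1` program produced from at most `n^p` atomic
matrices of width `w+1`. -/
def Fb (w : ℕ) : ℕ → ℕ → ℕ
  | 0, _ => 1
  | p+1, n => (w+1)^n * (3 + n * (Fb w p n + 1)) + 2

lemma core (Ok : R → Prop) (h0 : Ok 0) (h1 : Ok 1) (w : ℕ) :
    ∀ p n : ℕ, 1 ≤ n → ∀ Ms : List (Matrix (Fin (w+1)) (Fin (w+1)) R),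
    (∀ A ∈ Ms, ∀ i j, Ok (A i j)) → Ms.length ≤ n ^ p → ∀ i j,
    ∃ P : List (Matrix (Fin (2*p+1)) (Fin (2*p+1)) R),
      (∀ A ∈ P, ∀ a b, Ok (A a b)) ∧ P.prod 0 0 = Ms.prod i j ∧ P.length ≤ Fb w p n := by
  intro p
  induction p with
  | zero =>
      intro n hn Ms hOk hlen i j
      rcases Ms with _ | ⟨A, _ | ⟨B, tl⟩⟩
      · rcases eq_or_ne i j with rfl | hij
        · refine ⟨[Matrix.of fun _ _ => 1], ?_, ?_, ?_⟩
          · intro A hA a b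
            rw [List.mem_singleton] at hA
            subst hA
            simpa using h1
          · simp [Matrix.one_apply_eq]
          · simp [Fb]
        · refine ⟨[Matrix.of fun _ _ => 0], ?_, ?_, ?_⟩
          · intro A hA a b
            rw [List.mem_singleton] at hA
            subst hA
            simpa using h0
          · simp [Matrix.one_apply_ne hij]
          · simp [Fb]
      · refine ⟨[Matrix.of fun _ _ => A i j], ?_, ?_, ?_⟩
        · intro B hB a b
          rw [List.mem_singleton] at hB
          subst hB
          simpa using hOk A (List.mem_singleton_self A) i j
        · simp
        · simp [Fb]
      · exfalso
        simp at hlen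
  | succ p ih =>
      intro n hn Ms hOk hlen i j
      classical
      have hnp : 1 ≤ n ^ p := Nat.one_le_pow _ _ (by omega)
      obtain ⟨c, hc1⟩ : ∃ c, c + 1 = n ^ p := ⟨n ^ p - 1, by omega⟩
      have hlen' : Ms.length ≤ (c+1) * n := by
        rw [hc1]
        rw [pow_succ] at hlen
        exact hlen
      have hflat : (chunks c n Ms).flatten = Ms := chunks_flatten c n Ms hlen'
      have hch : ∀ ch ∈ chunks c n Ms, ∀ a b : Fin (w+1),
          ∃ P : List (Matrix (Fin (2*p+1)) (Fin (2*p+1)) R),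
            (∀ A ∈ P, ∀ a b, Ok (A a b)) ∧ P.prod 0 0 = ch.prod a b ∧ P.length ≤ Fb w p n := by
        intro ch hmem a b
        refine ih n hn ch ?_ ?_ a b
        · intro A hA i' j'
          exact hOk A (chunks_mem_sub c n Ms ch hmem A hA) i' j'
        · rw [← hc1]
          exact chunks_mem_length c n Ms ch hmem
      refine ⟨bigprog (pm ((chunks c n Ms).attach.map
          (fun x => Matrix.of (fun a b => (hch x.1 x.2 a b).choose))) i j), ?_, ?_, ?_⟩
      · refine bigprog_ok Ok h0 h1 _ ?_
        intro progs hprogs Q hQ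
        obtain ⟨A, hA, a, b, rfl⟩ := pm_mem_entry _ i j progs hprogs Q hQ
        rw [List.mem_map] at hA
        obtain ⟨x, hx, rfl⟩ := hA
        intro B hB i' j'
        exact (hch x.1 x.2 a b).choose_spec.1 B hB i' j'
      · rw [bigprog_val]
        refine Eq.trans (pm_sum (fun Q : List (Matrix (Fin (2*p+1)) (Fin (2*p+1)) R)
          => Q.prod 0 0) _ i j) ?_
        have hQm : (((chunks c n Ms).attach.map
              (fun x => Matrix.of (fun a b => (hch x.1 x.2 a b).choose))).map
              (fun A => Matrix.map A (fun Q => Q.prod 0 0)))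
            = (chunks c n Ms).map List.prod := by
          rw [List.map_map]
          have heq : ((fun A => Matrix.map A (fun Q : List (Matrix (Fin (2*p+1)) (Fin (2*p+1)) R)
                => Q.prod 0 0)) ∘ (fun x : {ch // ch ∈ chunks c n Ms}
                  => Matrix.of (fun a b => (hch x.1 x.2 a b).choose)))
              = fun x => List.prod x.1 := by
            funext x
            ext a b
            exact (hch x.1 x.2 a b).choose_spec.2.1
          rw [heq]
          exact List.attach_map_val
        refine Eq.trans (congrFun (congrFun (congrArg (fun L :
            List (Matrix (Fin (w+1)) (Fin (w+1)) R) => L.prod) hQm) i) j) ?_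
        show ((chunks c n Ms).map List.prod).prod i j = Ms.prod i j
        rw [← List.prod_flatten, hflat]
      · refine (bigprog_len _ ((w+1)^n) n (Fb w p n) ?_ ?_ ?_).trans ?_
        · refine (pm_length _ i j).trans ?_
          refine Nat.pow_le_pow_right (Nat.succ_le_succ (Nat.zero_le w)) ?_
          simpa using chunks_length c n Ms
        · intro progs hprogs
          rw [pm_mem_length _ i j progs hprogs]
          simpa using chunks_length c n Ms
        · intro progs hprogs Q hQ
          obtain ⟨A, hA, a, b, rfl⟩ := pm_mem_entry _ i j progs hprogs Q hQ
          rw [List.mem_map] at hA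
          obtain ⟨x, hx, rfl⟩ := hA
          exact (hch x.1 x.2 a b).choose_spec.2.2
        · rw [Fb]
          omega

/-! ### Numerical bound on `Fb` -/

lemma Fb_le (w n : ℕ) : ∀ p, Fb w p n + 1 ≤ 2 * ((w+1)^n * (n+3) + 2)^p := by
  intro p
  induction p with
  | zero => simp [Fb]
  | succ p ih =>
      have hA : 1 ≤ (w+1)^n := Nat.one_le_pow _ _ (by omega)
      have hH : 1 ≤ ((w+1)^n * (n+3) + 2)^p := Nat.one_le_pow _ _ (by omega)
      rw [Fb, pow_succ]
      set A := (w+1)^n with hAdef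
      set Hp := (A * (n+3) + 2)^p with hHdef
      have h1 : Fb w p n + 1 ≤ 2 * Hp := ih
      calc A * (3 + n * (Fb w p n + 1)) + 2 + 1
          ≤ A * (3 + n * (2 * Hp)) + 3 := by
            have := Nat.mul_le_mul_left n h1
            have := Nat.mul_le_mul_left A (Nat.add_le_add_left (Nat.mul_le_mul_left n h1) 3)
            omega
        _ ≤ 2 * (Hp * (A * (n + 3) + 2)) := by
            have e1 : A * (3 + n * (2 * Hp)) + 3
                = 3 * A + 2 * (A * n) * Hp + 3 := by ring
            have e2 : 2 * (Hp * (A * (n + 3) + 2))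
                = 2 * (A * n) * Hp + 6 * A * Hp + 4 * Hp := by ring
            rw [e1, e2]
            have g1 : 3 * A ≤ 3 * A * Hp := by
              nlinarith
            have g2 : 3 ≤ 4 * Hp := by omega
            nlinarith
end WidthRed

/-! ### Atoms in a polynomial semiring -/

def Atm {V S : Type} [CommSemiring S] (x : MvPolynomial V S) : Prop :=
  (∃ v, x = MvPolynomial.X v) ∨ (∃ c, x = MvPolynomial.C c)

lemma Atm0 {V S : Type} [CommSemiring S] : Atm (0 : MvPolynomial V S) :=
  Or.inr ⟨0, by simp⟩

lemma Atm1 {V S : Type} [CommSemiring S] : Atm (1 : MvPolynomial V S) :=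
  Or.inr ⟨1, by simp⟩

open MvPolynomial in
theorem generalWR {V S : Type} [CommSemiring S] (w L : ℕ)
    (M : Fin L → Matrix (Fin (w + 1)) (Fin (w + 1)) (MvPolynomial V S))
    (hM : IsABP M) (hs : 2 ≤ (w + 1) * (L + 1)) (p : ℕ) (hp : 1 ≤ p) :
    ∃ (L' : ℕ)
      (M' : Fin L' → Matrix (Fin (2 * p + 1)) (Fin (2 * p + 1)) (MvPolynomial V S)),
        IsABP M' ∧ (∀ a : V → S, ABPeval M' a = ABPeval M a) ∧
        (((2 * p + 1) * (L' + 1) : ℕ) : ℝ)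
          ≤ (((w + 1) * (L + 1) : ℕ) : ℝ)
              ^ ((((24 : ℕ) : ℝ) * ((p : ℕ) : ℝ)) * (((w + 1) * (L + 1) : ℕ) : ℝ) ^ (1 / (p : ℝ))) := by
  classical
  set s := (w + 1) * (L + 1) with hsdef
  have hs1R : (1 : ℝ) ≤ (s : ℝ) := by exact_mod_cast (by omega : 1 ≤ s)
  have hs2R : (2 : ℝ) ≤ (s : ℝ) := by exact_mod_cast hs
  have hp0 : (0 : ℝ) < (p : ℝ) := by exact_mod_cast hp
  set e := (s : ℝ) ^ (1 / (p : ℝ)) with hedef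
  have he1 : (1 : ℝ) ≤ e := by
    calc (1:ℝ) = (s:ℝ) ^ (0:ℝ) := (Real.rpow_zero _).symm
      _ ≤ e := Real.rpow_le_rpow_of_exponent_le hs1R (by positivity)
  obtain ⟨n, hndef⟩ : ∃ n : ℕ, n = ⌊e⌋₊ + 1 := ⟨_, rfl⟩
  have hn1 : 1 ≤ n := by omega
  have hen : e < (n : ℝ) := by
    have h := Nat.lt_floor_add_one e
    rw [hndef]
    push_cast
    linarith
  have hnle : (n : ℝ) ≤ 2 * e := by
    have h1 := Nat.floor_le (show (0:ℝ) ≤ e by positivity)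
    rw [hndef]
    push_cast
    linarith
  have hsn : (s : ℝ) ≤ (n : ℝ) ^ (p : ℕ) := by
    have h1 : (s : ℝ) = e ^ (p : ℕ) := by
      rw [hedef, ← Real.rpow_natCast ((s:ℝ) ^ (1 / (p:ℝ))) p, ← Real.rpow_mul (by positivity),
        one_div, inv_mul_cancel₀ (ne_of_gt hp0), Real.rpow_one]
    rw [h1]
    exact pow_le_pow_left₀ (by positivity) (le_of_lt hen) p
  have hLn : L ≤ n ^ p := by
    have hLs : (L : ℝ) ≤ (s : ℝ) := by
      have h : L ≤ s := le_trans (Nat.le_succ L) (Nat.le_mul_of_pos_left _ (by omega))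
      exact_mod_cast h
    have h : (L : ℝ) ≤ ((n ^ p : ℕ) : ℝ) := by
      rw [Nat.cast_pow]
      exact hLs.trans hsn
    exact_mod_cast h
  obtain ⟨P, hPok, hPval, hPlen⟩ :=
    WidthRed.core (Ok := Atm) Atm0 Atm1 w p n hn1 (List.ofFn M)
      (by
        intro A hA i j
        rw [List.mem_ofFn] at hA
        obtain ⟨l, rfl⟩ := hA
        exact hM l i j)
      (by simpa using hLn) 0 0
  refine ⟨P.length, fun l => P.get l, ?_, ?_, ?_⟩
  · intro l i j
    exact hPok _ (P.get_mem _) i j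
  · intro a
    unfold ABPeval
    rw [show (List.ofFn fun l => P.get l) = P from List.ofFn_get P, hPval]
  · have hws : w + 1 ≤ s := Nat.le_mul_of_pos_right _ (by omega)
    set H := (w+1)^n * (n+3) + 2 with hHdef
    have h1 : P.length + 1 ≤ 2 * H ^ p :=
      le_trans (Nat.add_le_add_right hPlen 1) (WidthRed.Fb_le w n p)
    have h2 : H ≤ s ^ (2*n+4) := by
      have g1 : (w+1)^n ≤ s^n := Nat.pow_le_pow_left hws n
      have g2 : n+3 ≤ s^(n+3) := by
        have g2a := Nat.lt_two_pow_self (n := n+3)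
        have g2b := Nat.pow_le_pow_left (show 2 ≤ s from hs) (n+3)
        omega
      have g3 : (w+1)^n * (n+3) ≤ s^n * s^(n+3) := Nat.mul_le_mul g1 g2
      have g4 : s^n * s^(n+3) = s^(2*n+3) := by rw [← pow_add]; ring_nf
      have g5 : 2 ≤ s^(2*n+3) := le_trans hs (Nat.le_self_pow (by omega) s)
      have g6 : 2 * s^(2*n+3) ≤ s * s^(2*n+3) := Nat.mul_le_mul_right _ hs
      have g7 : s * s^(2*n+3) = s^(2*n+4) := (pow_succ' s (2*n+3)).symm
      omega
    have h3 : H^p ≤ s^((2*n+4)*p) := by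
      calc H^p ≤ (s^(2*n+4))^p := Nat.pow_le_pow_left h2 p
        _ = s^((2*n+4)*p) := (pow_mul s _ p).symm
    have h4 : (2*p+1)*2 ≤ s^(2*p+2) := by
      have g1 := Nat.lt_two_pow_self (n := 2*p+1)
      have g2 : (2:ℕ)^(2*p+1) * 2 = 2^(2*p+2) := by rw [← pow_succ]
      have g3 : (2:ℕ)^(2*p+2) ≤ s^(2*p+2) := Nat.pow_le_pow_left hs (2*p+2)
      have g4 : (2*p+1)*2 ≤ 2^(2*p+1)*2 := Nat.mul_le_mul_right _ (le_of_lt g1)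
      omega
    have ht : p ≤ n*p := Nat.le_mul_of_pos_left p (by omega)
    have hexp : 2*p+2+(2*n+4)*p ≤ 12*(n*p) := by
      have h : (2*n+4)*p = 2*(n*p)+4*p := by ring
      rw [h]
      revert ht
      generalize n*p = t
      intro ht
      omega
    have key : (2*p+1)*(P.length+1) ≤ s^(12*(n*p)) := by
      calc (2*p+1)*(P.length+1) ≤ (2*p+1)*(2*H^p) := Nat.mul_le_mul_left _ h1
        _ = ((2*p+1)*2)*(H^p) := by ring
        _ ≤ s^(2*p+2) * s^((2*n+4)*p) := Nat.mul_le_mul h4 h3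
        _ = s^(2*p+2+(2*n+4)*p) := (pow_add s _ _).symm
        _ ≤ s^(12*(n*p)) := Nat.pow_le_pow_right (by omega) hexp
    have hfin : (((2*p+1)*(P.length+1) : ℕ) : ℝ) ≤ (s:ℝ) ^ (((12*(n*p)) : ℕ) : ℝ) := by
      rw [Real.rpow_natCast]
      exact_mod_cast key
    refine hfin.trans (Real.rpow_le_rpow_of_exponent_le hs1R ?_)
    have hc : ((12*(n*p) : ℕ) : ℝ) = 12 * ((n:ℝ) * (p:ℝ)) := by push_cast; ring
    rw [hc, show ((24:ℕ):ℝ) = 24 from by norm_num]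
    nlinarith [hnle, hp0.le, he1, mul_le_mul_of_nonneg_left hnle
      (show (0:ℝ) ≤ 12 * (p:ℝ) by positivity)]

/-- width reduction for ABPs: there is a universal constant `C`
such that, over `S = 𝖱` and over `S = 𝖱⁺`, every weakest width-`w` ABP (here of
width `w + 1 ≥ 1`) of length `L` in a finite variable set, of size
`s := (w+1)·(L+1) ≥ 2`, can be converted, for every `p ≥ 1`, into a weakest
width-`(2p+1)` ABP computing the same function whose size is at most
`s ^ (C · p · s^(1/p))` (real exponentiation). -/
theorem stmt10 : ∃ C : ℕ,
    (∀ (V : Type) [Fintype V] (w L : ℕ)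
      (M : Fin L → Matrix (Fin (w + 1)) (Fin (w + 1)) (MvPolynomial V TR)),
      IsABP M → 2 ≤ (w + 1) * (L + 1) →
      ∀ p : ℕ, 1 ≤ p →
      ∃ (L' : ℕ)
        (M' : Fin L' → Matrix (Fin (2 * p + 1)) (Fin (2 * p + 1)) (MvPolynomial V TR)),
          IsABP M' ∧ (∀ a : V → TR, ABPeval M' a = ABPeval M a) ∧
          (((2 * p + 1) * (L' + 1) : ℕ) : ℝ)
            ≤ (((w + 1) * (L + 1) : ℕ) : ℝ)
                ^ ((C * p : ℝ) * (((w + 1) * (L + 1) : ℕ) : ℝ) ^ (1 / (p : ℝ)))) ∧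
    (∀ (V : Type) [Fintype V] (w L : ℕ)
      (M : Fin L → Matrix (Fin (w + 1)) (Fin (w + 1)) (MvPolynomial V TRP)),
      IsABP M → 2 ≤ (w + 1) * (L + 1) →
      ∀ p : ℕ, 1 ≤ p →
      ∃ (L' : ℕ)
        (M' : Fin L' → Matrix (Fin (2 * p + 1)) (Fin (2 * p + 1)) (MvPolynomial V TRP)),
          IsABP M' ∧ (∀ a : V → TRP, ABPeval M' a = ABPeval M a) ∧
          (((2 * p + 1) * (L' + 1) : ℕ) : ℝ)
            ≤ (((w + 1) * (L + 1) : ℕ) : ℝ)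
                ^ ((C * p : ℝ) * (((w + 1) * (L + 1) : ℕ) : ℝ) ^ (1 / (p : ℝ)))) := by
  refine ⟨24, ?_, ?_⟩
  · intro V _ w L M hM hs p hp
    exact generalWR w L M hM hs p hp
  · intro V _ w L M hM hs p hp
    exact generalWR w L M hM hs p hp
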